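/- arXiv:2405.11834 — 2 statements merged into one kernel-verified Lean document; each statement's English description precedes it below -/
import Mathlib

section
/- For generalized Pareto quantile functions Q_γ(u) = ((1−u)^{−γ} − 1)/γ with 0 < γ₁ ≤ γ₂, the ratio u ↦ Q_{γ₂}(u)/Q_{γ₁}(u) is nondecreasing on (0,1); i.e., GP(γ₁,1) ≤_* GP(γ₂,1) in the star-shaped order. -/
open Set

/-- For generalized Pareto quantile functions `Q_γ(u) = ((1-u)^(-γ) - 1)/γ` with
`0 < γ₁ ≤ γ₂`, the ratio `u ↦ Q_{γ₂}(u)/Q_{γ₁}(u)` is nondecreasing on `(0,1)`,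
i.e. `GP(γ₁,1) ≤_* GP(γ₂,1)` in the star-shaped order. -/
theorem generalized_pareto_star_order (γ₁ γ₂ : ℝ) (h₁ : 0 < γ₁) (h₁₂ : γ₁ ≤ γ₂)
    (Q : ℝ → ℝ → ℝ) (hQ : ∀ γ : ℝ, ∀ u ∈ Ioo (0 : ℝ) 1, Q γ u = ((1 - u) ^ (-γ) - 1) / γ) :
    ∀ u ∈ Ioo (0 : ℝ) 1, ∀ v ∈ Ioo (0 : ℝ) 1, u ≤ v →
      Q γ₂ u / Q γ₁ u ≤ Q γ₂ v / Q γ₁ v := by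
  intro u hu v hv huv
  have h₂ : 0 < γ₂ := lt_of_lt_of_le h₁ h₁₂
  set c : ℝ := γ₂ / γ₁ with hc
  have hc1 : 1 ≤ c := (one_le_div h₁).mpr h₁₂
  have h1u : 0 < 1 - u := by linarith [hu.2]
  have h1v : 0 < 1 - v := by linarith [hv.2]
  set x : ℝ := (1 - u) ^ (-γ₁) with hx
  set y : ℝ := (1 - v) ^ (-γ₁) with hy
  have hx1 : 1 < x := by
    rw [hx, Real.one_lt_rpow_iff_of_pos h1u]
    exact Or.inr ⟨by linarith [hu.1], by linarith⟩
  have hy1 : 1 < y := by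
    rw [hy, Real.one_lt_rpow_iff_of_pos h1v]
    exact Or.inr ⟨by linarith [hv.1], by linarith⟩
  have hxy : x ≤ y := Real.rpow_le_rpow_of_nonpos h1v (by linarith) (by linarith)
  have hγc : -γ₂ = -γ₁ * c := by
    rw [hc]; field_simp
  have hxc : (1 - u) ^ (-γ₂) = x ^ c := by
    rw [hx, ← Real.rpow_mul h1u.le, hγc]
  have hyc : (1 - v) ^ (-γ₂) = y ^ c := by
    rw [hy, ← Real.rpow_mul h1v.le, hγc]
  -- secant slope monotonicity for the convex function z ↦ z ^ c
  have hconv : ConvexOn ℝ (Ici 0) fun z : ℝ => z ^ c := convexOn_rpow hc1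
  have hsec : (x ^ c - 1) / (x - 1) ≤ (y ^ c - 1) / (y - 1) := by
    have := hconv.secant_mono (a := 1) (x := x) (y := y)
      (mem_Ici.mpr zero_le_one) (mem_Ici.mpr (by linarith)) (mem_Ici.mpr (by linarith))
      (by linarith) (by linarith) hxy
    simpa [Real.one_rpow] using this
  have key : ∀ A B : ℝ, A / γ₂ / (B / γ₁) = A / B * (γ₁ / γ₂) := by
    intro A B
    field_simp
  rw [hQ γ₁ u hu, hQ γ₂ u hu, hQ γ₁ v hv, hQ γ₂ v hv, hxc, hyc, ← hx, ← hy, key, key]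
  exact mul_le_mul_of_nonneg_right hsec (by positivity)
end

section
/- Let X ~ Student's t distribution with ν degrees of freedom (stochastic representation X = N/√(Z/ν) with N standard normal, Z chi-squared with ν degrees of freedom, independent) and Y standard normal. Then Y ≤_* X in the star-shaped order, i.e. u ↦ F_X^{-1}(u)/F_Y^{-1}(u) is nondecreasing on (1/2, 1). -/
open scoped ENNReal NNReal
open MeasureTheory ProbabilityTheory Set Filter Topology Asymptotics

namespace StudentAux

/-- quasiconvexity from monotone derivative on an interval -/
lemma quasi_aux {f f' : ℝ → ℝ} {x y z : ℝ} (hxy : x ≤ y) (hyz : y ≤ z)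
    (hd : ∀ t ∈ Icc x z, HasDerivAt f (f' t) t)
    (hm : ∀ s ∈ Icc x z, ∀ t ∈ Icc x z, s ≤ t → f' s ≤ f' t) :
    f y ≤ max (f x) (f z) := by
  by_contra hc
  push_neg at hc
  rw [max_lt_iff] at hc
  have hxy' : x < y := hxy.lt_of_ne (by rintro rfl; exact lt_irrefl _ hc.1)
  have hyz' : y < z := hyz.lt_of_ne (by rintro rfl; exact lt_irrefl _ hc.2)
  have hcont : ∀ a b : ℝ, x ≤ a → b ≤ z → ContinuousOn f (Icc a b) := fun a b ha hb =>
    fun t ht => ((hd t ⟨ha.trans ht.1, ht.2.trans hb⟩).continuousAt).continuousWithinAt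
  obtain ⟨p, hp, hp'⟩ := exists_hasDerivAt_eq_slope f f' hxy' (hcont x y le_rfl hyz'.le)
    (fun t ht => hd t ⟨ht.1.le, ht.2.le.trans hyz⟩)
  obtain ⟨q, hq, hq'⟩ := exists_hasDerivAt_eq_slope f f' hyz' (hcont y z hxy le_rfl)
    (fun t ht => hd t ⟨hxy.trans ht.1.le, ht.2.le⟩)
  have hfp : 0 < f' p := by
    rw [hp']; exact div_pos (by linarith [hc.1]) (by linarith [hp.1, hp.2])
  have hfq : f' q < 0 := by
    rw [hq']
    exact div_neg_of_neg_of_pos (by linarith [hc.2]) (by linarith [hq.1, hq.2])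
  have : f' p ≤ f' q := hm p ⟨hp.1.le, hp.2.le.trans hyz⟩ q ⟨hxy.trans hq.1.le, hq.2.le⟩
    (hp.2.le.trans hq.1.le)
  linarith


lemma slope_point {D D' : ℝ → ℝ} (hd : ∀ x, HasDerivAt D (D' x) x) {a b : ℝ} (hab : a < b) :
    ∃ c ∈ Ioo a b, D' c = (D b - D a) / (b - a) :=
  exists_hasDerivAt_eq_slope D D' hab
    (fun t _ => (hd t).continuousAt.continuousWithinAt) (fun t _ => hd t)

/-- Key shape lemma. -/
lemma key_lemma {D h w : ℝ → ℝ}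
    (hw : ∀ x, 0 < w x)
    (hd : ∀ x, HasDerivAt D (w x * (1 - h x)) x)
    (hD0 : D 0 = 0)
    (hDtop : Tendsto D atTop (𝓝 0))
    (hq : ∀ x y z : ℝ, 0 < x → x ≤ y → y ≤ z → h y ≤ max (h x) (h z))
    (hhtop : Tendsto h atTop atTop)
    {a b : ℝ} (ha : 0 < a) (hab : a ≤ b) (hDb : D b = 0) :
    D a ≤ 0 := by
  by_contra hDa
  push_neg at hDa
  have hab' : a < b := hab.lt_of_ne (by rintro rfl; exact absurd hDb (ne_of_gt hDa))
  -- point p ∈ (0,a) with h p < 1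
  have hsign : ∀ x : ℝ, 0 < w x * (1 - h x) → h x < 1 := fun x hx => by
    nlinarith [hw x]
  have hsign' : ∀ x : ℝ, w x * (1 - h x) < 0 → 1 < h x := fun x hx => by
    nlinarith [hw x]
  obtain ⟨p, hp, hp'⟩ := slope_point hd ha
  have hhp : h p < 1 := hsign p (by rw [hp', hD0]; exact div_pos (by linarith) (by linarith [hp.1, hp.2]))
  -- point s ∈ (a,b) with h s > 1
  obtain ⟨s, hs, hs'⟩ := slope_point hd hab'
  have hhs : 1 < h s := hsign' s (by
    rw [hs', hDb]
    apply div_neg_of_neg_of_pos (by linarith) (by linarith))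
  -- get x₀ > b with D x₀ ≠ 0
  have hex : ∃ x₀, b < x₀ ∧ D x₀ ≠ 0 := by
    by_contra hcon
    push_neg at hcon
    have hone : ∀ x, b < x → h x = 1 := by
      intro x hx
      have hev : D =ᶠ[𝓝 x] (fun _ => (0 : ℝ)) := by
        filter_upwards [Ioi_mem_nhds hx] with t ht
        exact hcon t ht
      have h0 : HasDerivAt D 0 x := (hasDerivAt_const x (0 : ℝ)).congr_of_eventuallyEq hev
      have := (hd x).unique h0
      have hwx := (hw x).ne'
      have : 1 - h x = 0 := by
        rcases mul_eq_zero.mp this with h' | h'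
        · exact absurd h' hwx
        · exact h'
      linarith
    obtain ⟨x, hx⟩ := (hhtop.eventually (eventually_gt_atTop (2:ℝ))).and
      (eventually_gt_atTop b) |>.exists
    rw [hone x hx.2] at hx
    linarith [hx.1]
  obtain ⟨x₀, hx₀b, hx₀⟩ := hex
  -- get r > b with h r < 1
  have hex2 : ∃ r, b < r ∧ h r < 1 := by
    rcases lt_or_gt_of_ne hx₀ with hneg | hpos
    · -- D x₀ < 0 : find x₁ > x₀ with D x₁ > D x₀
      obtain ⟨x₁, hx₁, hx₁'⟩ := ((hDtop.eventually (eventually_gt_nhds hneg)).and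
        (eventually_gt_atTop x₀)).exists
      obtain ⟨r, hr, hr'⟩ := slope_point hd hx₁'
      exact ⟨r, hx₀b.trans hr.1, hsign r (by
        rw [hr']; exact div_pos (by linarith) (by linarith [hr.1, hr.2]))⟩
    · -- D x₀ > 0 : slope on (b, x₀) is positive
      obtain ⟨r, hr, hr'⟩ := slope_point hd hx₀b
      exact ⟨r, hr.1, hsign r (by
        rw [hr', hDb]; exact div_pos (by linarith) (by linarith [hr.1, hr.2]))⟩
  obtain ⟨r, hrb, hhr⟩ := hex2
  have := hq p s r hp.1 (hp.2.le.trans hs.1.le) (hs.2.le.trans hrb.le)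
  rcases max_cases (h p) (h r) with ⟨hm, _⟩ | ⟨hm, _⟩ <;> rw [hm] at this <;> linarith



lemma integrableOn_of_rep {m : Measure ℝ} [IsProbabilityMeasure m] {ρ : ℝ → ℝ}
    (hρm : Measurable ρ) (hρ0 : ∀ x, 0 ≤ ρ x)
    (hm : ∀ x, m (Iic x) = ∫⁻ w in Iic x, ENNReal.ofReal (ρ w)) (x : ℝ) :
    IntegrableOn ρ (Iic x) := by
  refine ⟨hρm.aestronglyMeasurable, ?_⟩
  rw [hasFiniteIntegral_iff_ofReal (ae_of_all _ hρ0), ← hm x]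
  exact measure_lt_top m _

lemma cdf_rep {m : Measure ℝ} [IsProbabilityMeasure m] {ρ : ℝ → ℝ}
    (hρm : Measurable ρ) (hρ0 : ∀ x, 0 ≤ ρ x)
    (hm : ∀ x, m (Iic x) = ∫⁻ w in Iic x, ENNReal.ofReal (ρ w)) (x : ℝ) :
    cdf m x = ∫ w in Iic x, ρ w := by
  rw [cdf_eq_real, measureReal_def, hm x,
    ← ofReal_integral_eq_lintegral_ofReal (integrableOn_of_rep hρm hρ0 hm x) (ae_of_all _ hρ0),
    ENNReal.toReal_ofReal (integral_nonneg hρ0)]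

lemma hasDerivAt_of_rep {ρ F : ℝ → ℝ} (hρc : Continuous ρ)
    (hInt : ∀ x, IntegrableOn ρ (Iic x)) (hF : ∀ x, F x = ∫ w in Iic x, ρ w) (x : ℝ) :
    HasDerivAt F (ρ x) x := by
  have hEq : F = fun y => F x + ∫ w in x..y, ρ w := funext fun y => by
    rw [hF y, hF x, ← intervalIntegral.integral_Iic_sub_Iic (hInt x) (hInt y)]
    ring
  rw [hEq]
  exact (intervalIntegral.integral_hasDerivAt_right (hρc.intervalIntegrable x x)
    (hρc.stronglyMeasurable.stronglyMeasurableAtFilter) hρc.continuousAt).const_add (F x)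

open scoped ENNReal in
lemma lintegral_Iic_mul {f : ℝ → ℝ≥0∞} (hf : Measurable f) {s : ℝ} (hs : 0 < s) (x : ℝ) :
    ∫⁻ n in Iic (x * s), f n = ∫⁻ w in Iic x, ENNReal.ofReal s * f (s * w) := by
  have hpre : (fun w => s * w) ⁻¹' (Iic (x * s)) = Iic x := by
    ext w
    simp only [mem_preimage, mem_Iic]
    rw [mul_comm x s]
    exact mul_le_mul_iff_right₀ hs
  have h1 : Measure.map (fun w => s * w) (volume.restrict (Iic x))
      = ENNReal.ofReal s⁻¹ • volume.restrict (Iic (x * s)) := by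
    rw [← hpre, ← Measure.restrict_map (measurable_const_mul s) measurableSet_Iic,
      Real.map_volume_mul_left (ne_of_gt hs), abs_inv, abs_of_pos hs,
      Measure.restrict_smul]
  have h2 : ∫⁻ w in Iic x, f (s * w) = ENNReal.ofReal s⁻¹ * ∫⁻ n in Iic (x * s), f n := by
    rw [← lintegral_map hf (measurable_const_mul s), h1, lintegral_smul_measure, smul_eq_mul]
  rw [lintegral_const_mul _ (show Measurable fun w => f (s * w) from hf.comp (measurable_const_mul s)), h2, ← mul_assoc,
    ← ENNReal.ofReal_mul hs.le, mul_inv_cancel₀ (ne_of_gt hs), ENNReal.ofReal_one, one_mul]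



noncomputable def tC (νR : ℝ) : ℝ :=
  (1/2:ℝ) ^ (νR/2) / Real.Gamma (νR/2) * (Real.sqrt νR)⁻¹ * (Real.sqrt (2*Real.pi))⁻¹
    * Real.Gamma ((νR+1)/2) * (2:ℝ) ^ ((νR+1)/2)

noncomputable def tpdf (νR : ℝ) (w : ℝ) : ℝ := tC νR * (1 + w^2/νR) ^ (-((νR+1)/2))

lemma tC_pos {νR : ℝ} (hν : 0 < νR) : 0 < tC νR := by
  have h1 : 0 < Real.Gamma (νR/2) := Real.Gamma_pos_of_pos (by linarith)
  have h2 : 0 < Real.Gamma ((νR+1)/2) := Real.Gamma_pos_of_pos (by linarith)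
  have h3 : 0 < Real.sqrt νR := Real.sqrt_pos.mpr hν
  have h4 : 0 < Real.sqrt (2*Real.pi) := Real.sqrt_pos.mpr (by positivity)
  unfold tC
  positivity

lemma one_add_sq_pos {νR : ℝ} (hν : 0 < νR) (w : ℝ) : 0 < 1 + w^2/νR := by positivity

lemma tpdf_pos {νR : ℝ} (hν : 0 < νR) (w : ℝ) : 0 < tpdf νR w := by
  have := tC_pos hν
  have := one_add_sq_pos hν w
  unfold tpdf
  positivity

lemma tpdf_continuous {νR : ℝ} (hν : 0 < νR) : Continuous (tpdf νR) := by
  apply continuous_const.mul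
  apply Continuous.rpow_const
  · continuity
  · exact fun w => Or.inl (ne_of_gt (one_add_sq_pos hν w))

lemma density_calc {νR : ℝ} (hν : 0 < νR) (w z : ℝ) (hz : 0 < z) :
    tpdf νR w * gammaPDFReal ((νR+1)/2) ((1 + w^2/νR)/2) z
      = gammaPDFReal (νR/2) (1/2) z
        * (Real.sqrt (z/νR) * gaussianPDFReal 0 1 (Real.sqrt (z/νR) * w)) := by
  have hb : 0 < 1 + w^2/νR := one_add_sq_pos hν w
  have hG1 : 0 < Real.Gamma (νR/2) := Real.Gamma_pos_of_pos (by linarith)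
  have hG2 : 0 < Real.Gamma ((νR+1)/2) := Real.Gamma_pos_of_pos (by linarith)
  have hs1 : (0:ℝ) < Real.sqrt νR := Real.sqrt_pos.mpr hν
  have hs2 : (0:ℝ) < Real.sqrt (2*Real.pi) := Real.sqrt_pos.mpr (by positivity)
  have h2p : (0:ℝ) < (2:ℝ) ^ ((νR+1)/2) := Real.rpow_pos_of_pos (by norm_num) _
  have hbp : (0:ℝ) < (1 + w^2/νR) ^ ((νR+1)/2) := Real.rpow_pos_of_pos hb _
  unfold tpdf tC gammaPDFReal gaussianPDFReal
  rw [if_pos hz.le, if_pos hz.le]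
  simp only [NNReal.coe_one, mul_one, sub_zero]
  have e1 : ((1 + w^2/νR)/2) ^ ((νR+1)/2)
      = (1 + w^2/νR) ^ ((νR+1)/2) / (2:ℝ) ^ ((νR+1)/2) :=
    Real.div_rpow hb.le (by norm_num) _
  have e3 : Real.sqrt (z/νR) = z ^ (1/2:ℝ) / Real.sqrt νR := by
    rw [Real.sqrt_div hz.le, Real.sqrt_eq_rpow]
  have e4 : z ^ ((νR+1)/2 - 1) = z ^ (νR/2 - 1) * z ^ (1/2:ℝ) := by
    rw [← Real.rpow_add hz]; ring_nf
  have e5 : (Real.sqrt (z/νR) * w)^2 = z/νR * w^2 := by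
    rw [mul_pow, Real.sq_sqrt (by positivity)]
  rw [Real.rpow_neg hb.le, e1, e5, e3, e4,
    show Real.exp (-((1 + w^2/νR)/2*z)) = Real.exp (-(1/2*z)) * Real.exp (-(z/νR*w^2)/2) from by
      rw [← Real.exp_add]; congr 1; field_simp; ring]
  field_simp





noncomputable def hfun (K γ p t : ℝ) : ℝ := K * (1 + γ*t^2) ^ (-p) * Real.exp (t^2/2)

noncomputable def chi (K γ p t : ℝ) : ℝ := Real.log K - p * Real.log (1+γ*t) + t/2

lemma hfun_eq {K γ p : ℝ} (hK : 0 < K) (hγ : 0 < γ) (t : ℝ) :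
    hfun K γ p t = Real.exp (chi K γ p (t^2)) := by
  have hu : 0 < 1 + γ*t^2 := by positivity
  unfold hfun chi
  rw [Real.rpow_def_of_pos hu, Real.exp_add, Real.exp_sub, Real.exp_log hK,
    show Real.log (1 + γ*t^2) * -p = -(p * Real.log (1 + γ*t^2)) by ring, Real.exp_neg,
    div_eq_mul_inv]
  ring

lemma chi_hasDerivAt {K γ p t : ℝ} (hγ : 0 < γ) (ht : 0 ≤ t) :
    HasDerivAt (chi K γ p) (-(p * ((1+γ*t)⁻¹ * γ)) + 1/2) t := by
  have hu : (1+γ*t) ≠ 0 := by positivity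
  have h1 : HasDerivAt (fun t : ℝ => 1+γ*t) γ t := by
    simpa using ((hasDerivAt_id t).const_mul γ).const_add 1
  have h2 : HasDerivAt (fun t : ℝ => Real.log (1+γ*t)) ((1+γ*t)⁻¹ * γ) t :=
    HasDerivAt.comp (h₂ := Real.log) t (Real.hasDerivAt_log hu) h1
  have h3 : HasDerivAt (fun t : ℝ => Real.log K - p * Real.log (1+γ*t)) (-(p * ((1+γ*t)⁻¹ * γ))) t := by
    simpa using (h2.const_mul p).const_sub (Real.log K)
  exact h3.add ((hasDerivAt_id t).div_const 2)

lemma hfun_quasi {K γ p : ℝ} (hK : 0 < K) (hγ : 0 < γ) (hp : 0 < p)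
    {x y z : ℝ} (hx : 0 < x) (hxy : x ≤ y) (hyz : y ≤ z) :
    hfun K γ p y ≤ max (hfun K γ p x) (hfun K γ p z) := by
  have hx2 : x^2 ≤ y^2 := pow_le_pow_left₀ hx.le hxy 2
  have hy2 : y^2 ≤ z^2 := pow_le_pow_left₀ (hx.le.trans hxy) hyz 2
  have hxx : (0:ℝ) ≤ x^2 := sq_nonneg x
  have key : chi K γ p (y^2) ≤ max (chi K γ p (x^2)) (chi K γ p (z^2)) := by
    refine quasi_aux hx2 hy2 (fun t ht => chi_hasDerivAt hγ (hxx.trans ht.1)) ?_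
    intro s hs t ht hst
    have hs0 : (0:ℝ) ≤ s := hxx.trans hs.1
    have h1 : (0:ℝ) < 1+γ*s := by positivity
    have h2 : (0:ℝ) < 1+γ*t := by linarith [mul_le_mul_of_nonneg_left hst hγ.le]
    have : (1+γ*t)⁻¹ ≤ (1+γ*s)⁻¹ := by
      apply inv_anti₀ h1
      have := mul_le_mul_of_nonneg_left hst hγ.le
      linarith
    have h4 := mul_le_mul_of_nonneg_left this (mul_pos hp hγ).le
    nlinarith [h4]
  calc hfun K γ p y = Real.exp (chi K γ p (y^2)) := hfun_eq hK hγ y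
    _ ≤ max (Real.exp (chi K γ p (x^2))) (Real.exp (chi K γ p (z^2))) := by
        rcases max_cases (chi K γ p (x^2)) (chi K γ p (z^2)) with ⟨hm, _⟩ | ⟨hm, _⟩ <;> rw [hm] at key
        · exact le_max_of_le_left (Real.exp_le_exp.2 key)
        · exact le_max_of_le_right (Real.exp_le_exp.2 key)
    _ = max (hfun K γ p x) (hfun K γ p z) := by rw [hfun_eq hK hγ, hfun_eq hK hγ]

lemma chi_tendsto {K γ p : ℝ} (hγ : 0 < γ) :
    Tendsto (chi K γ p) atTop atTop := by
  have l1 : Tendsto (fun t:ℝ => 1+γ*t) atTop atTop :=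
    tendsto_atTop_add_const_left _ 1 (tendsto_id.const_mul_atTop hγ)
  have l2 : (fun t:ℝ => Real.log (1+γ*t)) =o[atTop] (fun t:ℝ => 1+γ*t) :=
    Real.isLittleO_log_id_atTop.comp_tendsto l1
  have l3 : (fun t:ℝ => 1+γ*t) =O[atTop] (fun t:ℝ => t) := by
    apply IsBigO.of_bound (1+γ)
    filter_upwards [eventually_ge_atTop (1:ℝ)] with t ht
    rw [Real.norm_eq_abs, Real.norm_eq_abs, abs_of_nonneg (by positivity : (0:ℝ) ≤ 1+γ*t),
      abs_of_nonneg (by linarith : (0:ℝ) ≤ t)]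
    nlinarith
  have l4 : (fun t:ℝ => p * Real.log (1+γ*t)) =o[atTop] (fun t:ℝ => t) :=
    (l2.trans_isBigO l3).const_mul_left p
  have l5 := l4.def (show (0:ℝ) < 1/4 by norm_num)
  have hten : Tendsto (fun t:ℝ => Real.log K + t/4) atTop atTop :=
    tendsto_atTop_add_const_left _ _ (tendsto_id.atTop_div_const (by norm_num))
  apply tendsto_atTop_mono' atTop ?_ hten
  filter_upwards [l5, eventually_ge_atTop (0:ℝ)] with t ht ht0
  rw [Real.norm_eq_abs, Real.norm_eq_abs, abs_of_nonneg ht0] at ht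
  have habs := abs_le.1 ht
  show Real.log K + t/4 ≤ chi K γ p t
  unfold chi
  linarith [habs.1, habs.2]

lemma hfun_tendsto {K γ p : ℝ} (hK : 0 < K) (hγ : 0 < γ) :
    Tendsto (hfun K γ p) atTop atTop := by
  have : Tendsto (fun t : ℝ => Real.exp (chi K γ p (t^2))) atTop atTop :=
    (Real.tendsto_exp_atTop.comp (chi_tendsto hγ)).comp (tendsto_pow_atTop two_ne_zero)
  exact this.congr (fun t => (hfun_eq hK hγ t).symm)


end StudentAux

open StudentAux

/-- Let `X = N / √(Z/ν)` have Student's t distribution with `ν` degrees of freedom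
(`N` standard normal, `Z` chi-squared with `ν` degrees of freedom, i.e.
`Gamma(ν/2, 1/2)`, independent of `N`), and let `Y = N` be standard normal. Then
`Y ≤_* X` in the star-shaped order: the ratio of quantile functions
`u ↦ F_X⁻¹(u) / F_Y⁻¹(u)` is nondecreasing on `(1/2, 1)`. -/
theorem studentT_star_order_normal {Ω : Type*} [MeasurableSpace Ω]
    (μ : Measure Ω) [IsProbabilityMeasure μ] (ν : ℕ) (hν : 0 < ν)
    (N Z : Ω → ℝ) (hN : Measurable N) (hZ : Measurable Z)
    (hNlaw : Measure.map N μ = gaussianReal 0 1)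
    (hZlaw : Measure.map Z μ = gammaMeasure ((ν : ℝ) / 2) (1 / 2))
    (hindep : ProbabilityTheory.IndepFun N Z μ)
    (X : Ω → ℝ) (hX : ∀ ω, X ω = N ω / Real.sqrt (Z ω / ν))
    (qX qY : ℝ → ℝ)
    (hqX : ∀ u ∈ Ioo (0 : ℝ) 1, cdf (Measure.map X μ) (qX u) = u)
    (hqY : ∀ u ∈ Ioo (0 : ℝ) 1, cdf (Measure.map N μ) (qY u) = u) :
    ∀ u ∈ Ioo (1 / 2 : ℝ) 1, ∀ v ∈ Ioo (1 / 2 : ℝ) 1, u ≤ v →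
      qX u / qY u ≤ qX v / qY v := by
  have hνR : (0:ℝ) < (ν:ℝ) := Nat.cast_pos.mpr hν
  obtain ⟨νR, hνRdef⟩ : ∃ r : ℝ, r = (ν:ℝ) := ⟨_, rfl⟩
  rw [← hνRdef] at hνR hZlaw
  have hXfun : X = fun ω => N ω / Real.sqrt (Z ω / νR) := by
    funext ω; rw [hX ω, hνRdef]
  have hXmeas : Measurable X := by
    rw [hXfun]
    exact hN.div ((Real.continuous_sqrt.measurable).comp (hZ.div_const νR))
  haveI : IsProbabilityMeasure (gammaMeasure (νR/2) (1/2)) :=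
    isProbabilityMeasure_gammaMeasure (by linarith) (by norm_num)
  haveI : IsProbabilityMeasure (Measure.map X μ) :=
    Measure.isProbabilityMeasure_map hXmeas.aemeasurable
  haveI : IsProbabilityMeasure (Measure.map N μ) := by rw [hNlaw]; infer_instance
  obtain ⟨φf, hφfdef⟩ : ∃ f : ℝ → ℝ, f = gaussianPDFReal 0 1 := ⟨_, rfl⟩
  have hφfc : Continuous φf := by
    rw [hφfdef]; unfold gaussianPDFReal
    exact continuous_const.mul (Continuous.rexp (by continuity))
  have hφfpos : ∀ x, 0 < φf x := fun x => hφfdef ▸ gaussianPDFReal_pos 0 1 x one_ne_zero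
  have hφfmeas : Measurable φf := hφfc.measurable
  obtain ⟨Φ, hΦ⟩ : ∃ f : ℝ → ℝ, f = ⇑(cdf (Measure.map N μ)) := ⟨_, rfl⟩
  obtain ⟨G, hG⟩ : ∃ f : ℝ → ℝ, f = ⇑(cdf (Measure.map X μ)) := ⟨_, rfl⟩
  -- representation of the normal law
  have hNrep : ∀ x, Measure.map N μ (Iic x) = ∫⁻ w in Iic x, ENNReal.ofReal (φf w) := by
    intro x
    rw [hNlaw, gaussianReal_of_var_ne_zero 0 one_ne_zero,
      withDensity_apply _ measurableSet_Iic, hφfdef]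
    rfl
  have hΦrep : ∀ x, Φ x = ∫ w in Iic x, φf w := fun x => by
    rw [hΦ]; exact cdf_rep hφfmeas (fun x => (hφfpos x).le) hNrep x
  have hΦd : ∀ x, HasDerivAt Φ (φf x) x :=
    hasDerivAt_of_rep hφfc
      (integrableOn_of_rep hφfmeas (fun x => (hφfpos x).le) hNrep) hΦrep
  have hΦsm : StrictMono Φ := strictMono_of_deriv_pos
    (fun x => by rw [(hΦd x).deriv]; exact hφfpos x)
  have hΦ0 : Φ 0 = 1/2 := by
    have heven : ∀ x, φf (-x) = φf x := fun x => by
      rw [hφfdef]; unfold gaussianPDFReal; simp [neg_sq]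
    have h1 : ∫ w in Iic (0:ℝ), φf w = ∫ w in Ioi (0:ℝ), φf w := by
      rw [show Ioi (0:ℝ) = Ioi (-0 : ℝ) by norm_num, ← integral_comp_neg_Iic 0 φf]
      exact setIntegral_congr_fun measurableSet_Iic (fun w _ => (heven w).symm)
    have h2 : (∫ w in Iic (0:ℝ), φf w) + ∫ w in Ioi (0:ℝ), φf w = 1 := by
      have hint : Integrable φf := hφfdef ▸ integrable_gaussianPDFReal 0 1
      rw [show Ioi (0:ℝ) = (Iic (0:ℝ))ᶜ by simp [compl_Iic],
        integral_add_compl measurableSet_Iic hint]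
      rw [hφfdef]
      exact integral_gaussianPDFReal_eq_one 0 one_ne_zero
    rw [hΦrep 0]
    linarith
  -- law of the pair
  have hpair : Measure.map (fun ω => (Z ω, N ω)) μ
      = (gammaMeasure (νR/2) (1/2)).prod (gaussianReal 0 1) := by
    rw [← hZlaw, ← hNlaw]
    exact (indepFun_iff_map_prod_eq_prod_map_map hZ.aemeasurable hN.aemeasurable).mp
      hindep.symm
  have hΓpos : ∀ᵐ z ∂(gammaMeasure (νR/2) (1/2)), 0 < z := by
    rw [ae_iff]
    have hset : {z : ℝ | ¬ 0 < z} = Iic 0 := by ext z; simp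
    rw [hset]
    unfold gammaMeasure
    rw [withDensity_apply _ measurableSet_Iic,
      lintegral_Iic_eq_lintegral_Iio_add_Icc _ le_rfl,
      lintegral_gammaPDF_of_nonpos le_rfl,
      setLIntegral_measure_zero _ _ (by simp [Real.volume_Icc]), add_zero]
  -- step R1: mixture representation
  have hR1 : ∀ x, Measure.map X μ (Iic x)
      = ∫⁻ z, ENNReal.ofReal (Φ (x * Real.sqrt (z/νR))) ∂(gammaMeasure (νR/2) (1/2)) := by
    intro x
    have hSm : MeasurableSet {q : ℝ × ℝ | q.2 / Real.sqrt (q.1/νR) ≤ x} :=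
      measurableSet_le (measurable_snd.div
        ((Real.continuous_sqrt.measurable).comp (measurable_fst.div_const νR)))
        measurable_const
    have hpre : (fun ω => (Z ω, N ω)) ⁻¹' {q : ℝ × ℝ | q.2 / Real.sqrt (q.1/νR) ≤ x}
        = X ⁻¹' Iic x := by
      ext ω; simp [hXfun, mem_Iic]
    rw [Measure.map_apply hXmeas measurableSet_Iic, ← hpre,
      ← Measure.map_apply (hZ.prodMk hN) hSm, hpair, Measure.prod_apply hSm]
    refine lintegral_congr_ae ?_
    filter_upwards [hΓpos] with z hz
    have hs : 0 < Real.sqrt (z/νR) := Real.sqrt_pos.mpr (by positivity)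
    have hslice : (Prod.mk z ⁻¹' {q : ℝ × ℝ | q.2 / Real.sqrt (q.1/νR) ≤ x})
        = Iic (x * Real.sqrt (z/νR)) := by
      ext n
      simp only [mem_preimage, mem_setOf_eq, mem_Iic]
      rw [div_le_iff₀ hs, mul_comm x]
    rw [hslice, hΦ, ofReal_cdf, hNlaw]
  -- G 0 = 1/2
  have hG0 : G 0 = 1/2 := by
    rw [hG, cdf_eq_real, measureReal_def, hR1 0]
    simp only [zero_mul, hΦ0]
    rw [lintegral_const, measure_univ, mul_one, ENNReal.toReal_ofReal (by norm_num)]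
  -- step R2: density representation
  have hR2 : ∀ x, Measure.map X μ (Iic x)
      = ∫⁻ w in Iic x, ENNReal.ofReal (tpdf νR w) := by
    intro x
    have hΦm : Measurable Φ := by rw [hΦ]; exact (cdf (Measure.map N μ)).mono.measurable
    rw [hR1 x]
    unfold gammaMeasure
    rw [lintegral_withDensity_eq_lintegral_mul _
      (show Measurable (gammaPDF (νR/2) (1/2)) from (measurable_gammaPDFReal _ _).ennreal_ofReal)
      (show Measurable fun z : ℝ => ENNReal.ofReal (Φ (x * Real.sqrt (z/νR))) from
        ENNReal.measurable_ofReal.comp (hΦm.comp ((measurable_id.div_const νR).sqrt.const_mul x)))]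
    have hne : ∀ᵐ z : ℝ, z ≠ (0:ℝ) := by
      rw [ae_iff]
      simp only [ne_eq, not_not]
      exact (by simp : volume ({z : ℝ | z = 0}) = 0)
    have hstep : ∀ᵐ z : ℝ, ((gammaPDF (νR/2) (1/2)) * fun z => ENNReal.ofReal (Φ (x * Real.sqrt (z/νR)))) z
        = ∫⁻ w in Iic x, ENNReal.ofReal (gammaPDFReal (νR/2) (1/2) z
            * (Real.sqrt (z/νR) * gaussianPDFReal 0 1 (Real.sqrt (z/νR) * w))) := by
      filter_upwards [hne] with z hz
      simp only [Pi.mul_apply]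
      rcases lt_or_gt_of_ne hz with hzneg | hzpos
      · rw [gammaPDF_of_neg hzneg, zero_mul]
        symm
        simp only [gammaPDFReal, if_neg (not_le.mpr hzneg), zero_mul, ENNReal.ofReal_zero,
          lintegral_zero]
      · have hs : 0 < Real.sqrt (z/νR) := Real.sqrt_pos.mpr (by positivity)
        have h1 : ENNReal.ofReal (Φ (x * Real.sqrt (z/νR)))
            = ∫⁻ n in Iic (x * Real.sqrt (z/νR)), gaussianPDF 0 1 n := by
          rw [hΦ, ofReal_cdf, hNlaw, gaussianReal_of_var_ne_zero 0 one_ne_zero,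
            withDensity_apply _ measurableSet_Iic]
        rw [h1, lintegral_Iic_mul (measurable_gaussianPDF 0 1) hs x,
          ← lintegral_const_mul _ (show Measurable fun w : ℝ =>
            ENNReal.ofReal (Real.sqrt (z/νR)) * gaussianPDF 0 1 (Real.sqrt (z/νR) * w) from
            measurable_const.mul ((measurable_gaussianPDF 0 1).comp (measurable_const_mul _)))]
        refine setLIntegral_congr_fun_ae measurableSet_Iic (ae_of_all _ (fun w _ => ?_))
        calc gammaPDF (νR/2) (1/2) z
              * (ENNReal.ofReal (Real.sqrt (z/νR)) * gaussianPDF 0 1 (Real.sqrt (z/νR) * w))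
            = ENNReal.ofReal (gammaPDFReal (νR/2) (1/2) z)
              * (ENNReal.ofReal (Real.sqrt (z/νR))
                * ENNReal.ofReal (gaussianPDFReal 0 1 (Real.sqrt (z/νR) * w))) := rfl
          _ = ENNReal.ofReal (gammaPDFReal (νR/2) (1/2) z
              * (Real.sqrt (z/νR) * gaussianPDFReal 0 1 (Real.sqrt (z/νR) * w))) := by
              rw [← ENNReal.ofReal_mul hs.le,
                ← ENNReal.ofReal_mul (gammaPDFReal_nonneg (by linarith) (by norm_num) z)]
    rw [lintegral_congr_ae hstep]
    rw [lintegral_lintegral_swap (by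
      apply Measurable.aemeasurable
      apply ENNReal.measurable_ofReal.comp
      exact ((measurable_gammaPDFReal _ _).comp measurable_fst).mul
        (((measurable_fst.div_const νR).sqrt).mul ((measurable_gaussianPDFReal 0 1).comp
          (((measurable_fst.div_const νR).sqrt).mul measurable_snd))))]
    refine setLIntegral_congr_fun_ae measurableSet_Iic (ae_of_all _ (fun w _ => ?_))
    -- inner integral equals ofReal (tpdf νR w)
    have hlam : (0:ℝ) < (1 + w^2/νR)/2 := by positivity
    have hpp : (0:ℝ) < (νR+1)/2 := by linarith
    have hpw : ∀ᵐ z : ℝ, ENNReal.ofReal (gammaPDFReal (νR/2) (1/2) z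
          * (Real.sqrt (z/νR) * gaussianPDFReal 0 1 (Real.sqrt (z/νR) * w)))
        = ENNReal.ofReal (tpdf νR w) * gammaPDF ((νR+1)/2) ((1 + w^2/νR)/2) z := by
      filter_upwards [hne] with z hz
      rcases lt_or_gt_of_ne hz with hzneg | hzpos
      · rw [gammaPDF_of_neg hzneg, mul_zero]
        simp only [gammaPDFReal, if_neg (not_le.mpr hzneg), zero_mul, ENNReal.ofReal_zero]
      · rw [← density_calc hνR w z hzpos, ENNReal.ofReal_mul (tpdf_pos hνR w).le]
        rfl
    rw [lintegral_congr_ae hpw,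
      lintegral_const_mul _ (show Measurable (gammaPDF ((νR+1)/2) ((1 + w^2/νR)/2)) from
        (measurable_gammaPDFReal _ _).ennreal_ofReal),
      lintegral_gammaPDF_eq_one hpp hlam, mul_one]
  -- facts about G
  have hGint : ∀ x, IntegrableOn (tpdf νR) (Iic x) :=
    integrableOn_of_rep (tpdf_continuous hνR).measurable (fun w => (tpdf_pos hνR w).le) hR2
  have hGrep : ∀ x, G x = ∫ w in Iic x, tpdf νR w := fun x => by
    rw [hG]
    exact cdf_rep (tpdf_continuous hνR).measurable (fun w => (tpdf_pos hνR w).le) hR2 x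
  have hGd : ∀ x, HasDerivAt G (tpdf νR x) x :=
    hasDerivAt_of_rep (tpdf_continuous hνR) hGint hGrep
  have hGsm : StrictMono G := strictMono_of_deriv_pos
    (fun x => by rw [(hGd x).deriv]; exact tpdf_pos hνR x)
  -- final assembly
  intro u hu v hv huv
  have hu01 : u ∈ Ioo (0:ℝ) 1 := ⟨by linarith [hu.1], hu.2⟩
  have hv01 : v ∈ Ioo (0:ℝ) 1 := ⟨by linarith [hv.1], hv.2⟩
  have hYu : Φ (qY u) = u := by rw [hΦ]; exact hqY u hu01
  have hYv : Φ (qY v) = v := by rw [hΦ]; exact hqY v hv01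
  have hXu : G (qX u) = u := by rw [hG]; exact hqX u hu01
  have hXv : G (qX v) = v := by rw [hG]; exact hqX v hv01
  have ha : 0 < qY u := by
    apply hΦsm.lt_iff_lt.mp
    rw [hΦ0, hYu]; linarith [hu.1]
  have hb : 0 < qY v := by
    apply hΦsm.lt_iff_lt.mp
    rw [hΦ0, hYv]; linarith [hv.1]
  have hab : qY u ≤ qY v := hΦsm.le_iff_le.mp (by rw [hYu, hYv]; exact huv)
  have hXv0 : 0 < qX v := by
    apply hGsm.lt_iff_lt.mp
    rw [hG0, hXv]; linarith [hv.1]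
  obtain ⟨c, hc⟩ : ∃ r : ℝ, r = qX v / qY v := ⟨_, rfl⟩
  have hcpos : 0 < c := hc ▸ div_pos hXv0 hb
  have hsqpi : (0:ℝ) < Real.sqrt (2*Real.pi) := Real.sqrt_pos.mpr (by positivity)
  have hKpos : 0 < c * tC νR * Real.sqrt (2*Real.pi) := by
    have := tC_pos hνR; positivity
  have hγpos : 0 < c^2/νR := by positivity
  have hpp : (0:ℝ) < (νR+1)/2 := by linarith
  have hφval : ∀ t, φf t = (Real.sqrt (2*Real.pi))⁻¹ * Real.exp (-(t^2/2)) := fun t => by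
    rw [hφfdef]; unfold gaussianPDFReal; norm_num
    exact Or.inl (by ring)
  have hhf : ∀ t, c * tpdf νR (c*t) / φf t
      = hfun (c * tC νR * Real.sqrt (2*Real.pi)) (c^2/νR) ((νR+1)/2) t := by
    intro t
    rw [hφval t]
    unfold hfun tpdf
    rw [show (1 + (c*t)^2/νR) = 1 + c^2/νR*t^2 by ring, Real.exp_neg]
    have he := Real.exp_ne_zero (t^2/2)
    field_simp
  have hd : ∀ x, HasDerivAt (fun x => Φ x - G (c*x))
      (φf x * (1 - hfun (c * tC νR * Real.sqrt (2*Real.pi)) (c^2/νR) ((νR+1)/2) x)) x := by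
    intro x
    have hcx : HasDerivAt (fun y : ℝ => c*y) c x := by
      simpa using (hasDerivAt_id x).const_mul c
    have h1 : HasDerivAt (fun y => G (c*y)) (tpdf νR (c*x) * c) x := (hGd (c*x)).comp x hcx
    have h2 := (hΦd x).sub h1
    refine h2.congr_deriv ?_
    rw [← hhf x]
    have := (hφfpos x).ne'
    field_simp
  have hD0 : Φ 0 - G (c*0) = 0 := by rw [mul_zero, hΦ0, hG0]; ring
  have hDtop : Tendsto (fun x => Φ x - G (c*x)) atTop (𝓝 0) := by
    have t1 : Tendsto Φ atTop (𝓝 1) := by rw [hΦ]; exact tendsto_cdf_atTop _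
    have t2 : Tendsto (fun x => G (c*x)) atTop (𝓝 1) := by
      rw [hG]
      exact (tendsto_cdf_atTop _).comp (tendsto_id.const_mul_atTop hcpos)
    simpa using t1.sub t2
  have hDb : Φ (qY v) - G (c * qY v) = 0 := by
    rw [hc, div_mul_cancel₀ _ hb.ne', hYv, hXv, sub_self]
  have hkey : Φ (qY u) - G (c * qY u) ≤ 0 :=
    key_lemma hφfpos hd hD0 hDtop
      (fun x y z hx hxy hyz => hfun_quasi hKpos hγpos hpp hx hxy hyz)
      (hfun_tendsto hKpos hγpos) ha hab hDb
  have h3 : qX u ≤ c * qY u := by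
    apply hGsm.le_iff_le.mp
    rw [hXu]
    linarith [hkey, hYu]
  calc qX u / qY u ≤ c := (div_le_iff₀ ha).mpr (by linarith [h3])
    _ = qX v / qY v := hc
end
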